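/- arXiv:2310.17759 — 2 statements merged into one kernel-verified Lean document; each statement's English description precedes it below -/
import Mathlib

section
/- Let E and E' be real Hilbert spaces, X ⊆ E and Y ⊆ E' nonempty closed convex sets each of diameter at most D, and F : E × E' → ℝ a differentiable function that is convex-concave on X × Y, with saddle operator G(x,y) = (∇_x F(x,y), −∇_y F(x,y)). Assume G is monotone and ℓ-Lipschitz on X × Y and ‖G(z)‖ ≤ L for all z ∈ X × Y. Let T ≥ 1, set α = 1/(ℓ√T), and fix z₀, z₀' ∈ X × Y with ‖z₀ − z₀'‖² ≤ δ². Define two gradient descent ascent trajectories z_{t+1} = Π_{X×Y}(z_t − α·G(z_t)) and z'_{t+1} = Π_{X×Y}(z'_t − α·G(z'_t)) for t = 0, …, T−1, and let z̄_T = (1/T)·Σ_{t=0}^{T−1} z_t and z̄'_T = (1/T)·Σ_{t=0}^{T−1} z'_t. Then ‖z̄_T − z̄'_T‖² ≤ e·δ², and moreover F(x̄_T, y) − F(x, ȳ_T) ≤ (ℓD² + L²/(2ℓ))/√T for every (x,y) ∈ X × Y, where z̄_T = (x̄_T, ȳ_T). -/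
open RealInnerProductSpace

noncomputable section

variable {E E' : Type*} [NormedAddCommGroup E] [InnerProductSpace ℝ E] [CompleteSpace E]
  [NormedAddCommGroup E'] [InnerProductSpace ℝ E'] [CompleteSpace E']

/-- The saddle operator `G(x,y) = (∇ₓ F(x,y), −∇_y F(x,y))` on the Hilbert product
`WithLp 2 (E × E')`. -/
def saddleOp (F : E × E' → ℝ) (z : WithLp 2 (E × E')) : WithLp 2 (E × E') :=
  (WithLp.equiv 2 (E × E')).symm
    (gradient (fun u => F (u, (WithLp.equiv 2 (E × E') z).2)) (WithLp.equiv 2 (E × E') z).1,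
     -gradient (fun v => F ((WithLp.equiv 2 (E × E') z).1, v)) (WithLp.equiv 2 (E × E') z).2)

/-- `X × Y` as a subset of the Hilbert product. -/
def prodSet (X : Set E) (Y : Set E') : Set (WithLp 2 (E × E')) :=
  (WithLp.equiv 2 (E × E')) ⁻¹' (X ×ˢ Y)

/-- `p` is the metric projection of `v` onto `S`. -/
def IsProjOn {H : Type*} [NormedAddCommGroup H] (S : Set H) (v p : H) : Prop :=
  p ∈ S ∧ ∀ w ∈ S, ‖v - p‖ ≤ ‖v - w‖

section Aux

variable {H : Type*} [NormedAddCommGroup H] [InnerProductSpace ℝ H]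

theorem IsProjOn.inner_le' {S : Set H} (hS : Convex ℝ S) {v p : H} (h : IsProjOn S v p) :
    ∀ w ∈ S, ⟪v - p, w - p⟫ ≤ 0 := by
  refine (norm_eq_iInf_iff_real_inner_le_zero hS h.1).mp ?_
  haveI : Nonempty S := ⟨⟨p, h.1⟩⟩
  refine le_antisymm (le_ciInf fun w => h.2 w w.2) ?_
  exact ciInf_le ⟨0, by rintro r ⟨w, rfl⟩; positivity⟩ (⟨p, h.1⟩ : S)

theorem IsProjOn.nonexpansive' {S : Set H} (hS : Convex ℝ S) {v p v' p' : H}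
    (h : IsProjOn S v p) (h' : IsProjOn S v' p') : ‖p - p'‖ ≤ ‖v - v'‖ := by
  have h1 : ⟪v - p, p' - p⟫ ≤ 0 := h.inner_le' hS p' h'.1
  have h2 : ⟪v' - p', p - p'⟫ ≤ 0 := h'.inner_le' hS p h.1
  have key : ‖p - p'‖ ^ 2 ≤ ⟪v - v', p - p'⟫ := by
    have e1 : ⟪v - v', p - p'⟫ - ⟪p - p', p - p'⟫ = ⟪v - p, p - p'⟫ - ⟪v' - p', p - p'⟫ := by
      rw [← inner_sub_left, ← inner_sub_left]; congr 1; abel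
    have e2 : ⟪v - p, p - p'⟫ = -⟪v - p, p' - p⟫ := by
      rw [← inner_neg_right]; congr 1; abel
    have e3 : ⟪p - p', p - p'⟫ = ‖p - p'‖ ^ 2 := real_inner_self_eq_norm_sq _
    linarith
  have h3 : ⟪v - v', p - p'⟫ ≤ ‖v - v'‖ * ‖p - p'‖ := real_inner_le_norm _ _
  nlinarith [norm_nonneg (p - p'), norm_nonneg (v - v')]

theorem ConvexOn.inner_gradient_le' [CompleteSpace H] {f : H → ℝ} {X : Set H} (hX : Convex ℝ X)
    (hfc : ConvexOn ℝ X f) {x u : H} (hx : x ∈ X) (hu : u ∈ X)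
    (hf : DifferentiableAt ℝ f x) : ⟪gradient f x, u - x⟫ ≤ f u - f x := by
  have hgc : ConvexOn ℝ (Set.Icc (0 : ℝ) 1) (fun t : ℝ => f (x + t • (u - x))) := by
    have h1 := (hfc.comp_affineMap (AffineMap.lineMap x u)).subset
      (fun t ht => by
        simp only [Set.mem_preimage, AffineMap.lineMap_apply_module']
        rw [add_comm]
        exact hX.add_smul_sub_mem hx hu ht) (convex_Icc 0 1)
    have h2 : (f ∘ (AffineMap.lineMap x u)) = fun t : ℝ => f (x + t • (u - x)) := by
      funext t
      simp [AffineMap.lineMap_apply_module', add_comm]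
    rwa [h2] at h1
  have hγ : HasDerivAt (fun t : ℝ => x + t • (u - x)) (u - x) 0 := by
    simpa using ((hasDerivAt_id (0 : ℝ)).smul_const (u - x)).const_add x
  have hfd : HasFDerivAt f (fderiv ℝ f x) (x + (0 : ℝ) • (u - x)) := by
    simpa using hf.hasFDerivAt
  have hgd : HasDerivAt (fun t : ℝ => f (x + t • (u - x))) ((fderiv ℝ f x) (u - x)) 0 :=
    hfd.comp_hasDerivAt 0 hγ
  have heq : (fderiv ℝ f x) (u - x) = ⟪gradient f x, u - x⟫ := by
    have h1 : HasGradientAt f (gradient f x) x := hf.hasGradientAt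
    rw [hasGradientAt_iff_hasFDerivAt] at h1
    rw [h1.fderiv]
    simp [InnerProductSpace.toDual_apply_apply]
  have hslope := hgc.le_slope_of_hasDerivAt (Set.left_mem_Icc.2 zero_le_one)
    (Set.right_mem_Icc.2 zero_le_one) zero_lt_one hgd
  rw [slope_def_field] at hslope
  simp only [one_smul, zero_smul, add_zero, sub_zero, div_one] at hslope
  rw [heq] at hslope
  have he : x + (u - x) = u := by abel
  rw [he] at hslope
  exact hslope

theorem gradient_neg' [CompleteSpace H] {f : H → ℝ} {x : H} (hf : DifferentiableAt ℝ f x) :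
    gradient (fun y => -f y) x = -gradient f x := by
  have h1 : HasGradientAt f (gradient f x) x := hf.hasGradientAt
  rw [hasGradientAt_iff_hasFDerivAt] at h1
  have h2 : HasFDerivAt (fun y => -f y) (-(InnerProductSpace.toDual ℝ H (gradient f x))) x :=
    h1.neg
  have h3 : (-(InnerProductSpace.toDual ℝ H (gradient f x)))
      = InnerProductSpace.toDual ℝ H (-gradient f x) := by
    ext v; simp
  rw [h3, ← hasGradientAt_iff_hasFDerivAt] at h2
  exact h2.gradient

end Aux

set_option maxHeartbeats 1000000 in
/-- Theorem 4.2, part (i).  Gradient descent ascent with stepsize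
`α = 1/(ℓ√T)` started from two initializations with `‖z₀ − z₀'‖² ≤ δ²` has averaged iterates
satisfying `‖z̄_T − z̄'_T‖² ≤ e·δ²`, and the duality gap of the averaged iterate is at most
`(ℓD² + L²/(2ℓ))/√T`. -/
theorem gda_inexact_initialization
    (X : Set E) (Y : Set E') (hXne : X.Nonempty) (hYne : Y.Nonempty)
    (hXcl : IsClosed X) (hYcl : IsClosed Y) (hXcv : Convex ℝ X) (hYcv : Convex ℝ Y)
    (D : ℝ) (hXD : ∀ s₁ ∈ X, ∀ s₂ ∈ X, ‖s₁ - s₂‖ ≤ D) (hYD : ∀ s₁ ∈ Y, ∀ s₂ ∈ Y, ‖s₁ - s₂‖ ≤ D)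
    (F : E × E' → ℝ) (hFdiff : Differentiable ℝ F)
    (hcvx : ∀ y ∈ Y, ConvexOn ℝ X (fun x => F (x, y)))
    (hccv : ∀ x ∈ X, ConcaveOn ℝ Y (fun y => F (x, y)))
    (ℓ : ℝ) (hℓ : 0 < ℓ)
    (hmono : ∀ z₁ ∈ prodSet X Y, ∀ z₂ ∈ prodSet X Y,
      0 ≤ ⟪saddleOp F z₁ - saddleOp F z₂, z₁ - z₂⟫)
    (hlip : ∀ z₁ ∈ prodSet X Y, ∀ z₂ ∈ prodSet X Y,
      ‖saddleOp F z₁ - saddleOp F z₂‖ ≤ ℓ * ‖z₁ - z₂‖)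
    (L : ℝ) (hL : ∀ z ∈ prodSet X Y, ‖saddleOp F z‖ ≤ L)
    (T : ℕ) (hT : 1 ≤ T) (α : ℝ) (hα : α = 1 / (ℓ * Real.sqrt T))
    (δ : ℝ)
    (z z' : ℕ → WithLp 2 (E × E'))
    (hz0 : z 0 ∈ prodSet X Y) (hz0' : z' 0 ∈ prodSet X Y)
    (hdev : ‖z 0 - z' 0‖ ^ 2 ≤ δ ^ 2)
    (hupd : ∀ t < T, IsProjOn (prodSet X Y) (z t - α • saddleOp F (z t)) (z (t + 1)))
    (hupd' : ∀ t < T, IsProjOn (prodSet X Y) (z' t - α • saddleOp F (z' t)) (z' (t + 1))) :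
    ‖(T : ℝ)⁻¹ • ∑ t ∈ Finset.range T, z t - (T : ℝ)⁻¹ • ∑ t ∈ Finset.range T, z' t‖ ^ 2 ≤
      Real.exp 1 * δ ^ 2 ∧
    ∀ x ∈ X, ∀ y ∈ Y,
      F ((WithLp.equiv 2 (E × E') ((T : ℝ)⁻¹ • ∑ t ∈ Finset.range T, z t)).1, y) -
        F (x, (WithLp.equiv 2 (E × E') ((T : ℝ)⁻¹ • ∑ t ∈ Finset.range T, z t)).2) ≤
      (ℓ * D ^ 2 + L ^ 2 / (2 * ℓ)) / Real.sqrt T := by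
  -- basic positivity facts
  have hT0 : (0 : ℝ) < T := by exact_mod_cast hT
  have hsT : (0 : ℝ) < Real.sqrt T := Real.sqrt_pos.2 hT0
  have hsT2 : Real.sqrt T ^ 2 = (T : ℝ) := Real.sq_sqrt hT0.le
  have hα0 : 0 < α := by rw [hα]; positivity
  -- convexity of the feasible set
  have hScv : Convex ℝ (prodSet X Y) := by
    intro z₁ h₁ z₂ h₂ a b ha hb hab
    constructor
    · exact hXcv h₁.1 h₂.1 ha hb hab
    · exact hYcv h₁.2 h₂.2 ha hb hab
  -- the iterates stay in the feasible set
  have hzS : ∀ t, t ≤ T → z t ∈ prodSet X Y := by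
    intro t
    induction t with
    | zero => intro _; exact hz0
    | succ n ih => intro h; exact (hupd n (Nat.lt_of_succ_le h)).1
  have hzS' : ∀ t, t ≤ T → z' t ∈ prodSet X Y := by
    intro t
    induction t with
    | zero => intro _; exact hz0'
    | succ n ih => intro h; exact (hupd' n (Nat.lt_of_succ_le h)).1
  -- the stepsize relation
  have hα2 : α ^ 2 * ℓ ^ 2 = 1 / T := by
    rw [hα, div_pow, one_pow, mul_pow, hsT2]
    field_simp
  -- Part 1: contraction estimate per step
  have hstep : ∀ t < T, ‖z (t + 1) - z' (t + 1)‖ ^ 2 ≤ (1 + 1 / T) * ‖z t - z' t‖ ^ 2 := by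
    intro t ht
    have hne : ‖z (t + 1) - z' (t + 1)‖ ≤
        ‖(z t - α • saddleOp F (z t)) - (z' t - α • saddleOp F (z' t))‖ :=
      (hupd t ht).nonexpansive' hScv (hupd' t ht)
    have hrw : (z t - α • saddleOp F (z t)) - (z' t - α • saddleOp F (z' t))
        = (z t - z' t) - α • (saddleOp F (z t) - saddleOp F (z' t)) := by
      rw [smul_sub]; abel
    rw [hrw] at hne
    set a := z t - z' t with hadef
    set b := saddleOp F (z t) - saddleOp F (z' t) with hbdef
    have hmm : 0 ≤ ⟪b, a⟫ := hmono _ (hzS t ht.le) _ (hzS' t ht.le)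
    have hl : ‖b‖ ≤ ℓ * ‖a‖ := hlip _ (hzS t ht.le) _ (hzS' t ht.le)
    have hcomm : ⟪a, b⟫ = ⟪b, a⟫ := real_inner_comm _ _
    have hexp : ‖a - α • b‖ ^ 2 = ‖a‖ ^ 2 - 2 * (α * ⟪a, b⟫) + α ^ 2 * ‖b‖ ^ 2 := by
      rw [norm_sub_sq_real, real_inner_smul_right, norm_smul, mul_pow, Real.norm_eq_abs, sq_abs]
    have h1 : ‖z (t + 1) - z' (t + 1)‖ ^ 2 ≤ ‖a - α • b‖ ^ 2 :=
      pow_le_pow_left₀ (norm_nonneg _) hne 2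
    have h2 : ‖b‖ ^ 2 ≤ ℓ ^ 2 * ‖a‖ ^ 2 := by
      have := pow_le_pow_left₀ (norm_nonneg b) hl 2
      rw [mul_pow] at this; exact this
    have h3 : ‖a - α • b‖ ^ 2 ≤ ‖a‖ ^ 2 + α ^ 2 * ℓ ^ 2 * ‖a‖ ^ 2 := by
      rw [hexp, hcomm]
      nlinarith [mul_nonneg hα0.le hmm, sq_nonneg α]
    calc ‖z (t + 1) - z' (t + 1)‖ ^ 2 ≤ ‖a‖ ^ 2 + α ^ 2 * ℓ ^ 2 * ‖a‖ ^ 2 := h1.trans h3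
      _ = (1 + 1 / T) * ‖a‖ ^ 2 := by rw [hα2]; ring
  -- geometric growth bound
  have hquad : ∀ t, t ≤ T → ‖z t - z' t‖ ^ 2 ≤ (1 + 1 / T) ^ t * δ ^ 2 := by
    intro t
    induction t with
    | zero => intro _; simpa using hdev
    | succ n ih =>
      intro h
      have hn : n < T := Nat.lt_of_succ_le h
      calc ‖z (n + 1) - z' (n + 1)‖ ^ 2 ≤ (1 + 1 / T) * ‖z n - z' n‖ ^ 2 := hstep n hn
        _ ≤ (1 + 1 / T) * ((1 + 1 / T) ^ n * δ ^ 2) := by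
            refine mul_le_mul_of_nonneg_left (ih hn.le) ?_
            positivity
        _ = (1 + 1 / T) ^ (n + 1) * δ ^ 2 := by ring
  have hδ0 : (0 : ℝ) ≤ δ ^ 2 := le_trans (by positivity) hdev
  have hebound : ∀ t, t ≤ T → ‖z t - z' t‖ ^ 2 ≤ Real.exp 1 * δ ^ 2 := by
    intro t ht
    refine (hquad t ht).trans ?_
    have hbase : (1 : ℝ) ≤ 1 + 1 / T := by
      have h0 : (0 : ℝ) ≤ 1 / T := by positivity
      linarith
    have h1 : (1 + 1 / (T : ℝ)) ^ t ≤ (1 + 1 / T) ^ T := pow_le_pow_right₀ hbase ht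
    have h2 : (1 + 1 / (T : ℝ)) ^ T ≤ Real.exp (1 / T) ^ T := by
      refine pow_le_pow_left₀ (by positivity) ?_ T
      have := Real.add_one_le_exp (1 / (T : ℝ))
      linarith
    have h3 : Real.exp (1 / (T : ℝ)) ^ T = Real.exp 1 := by
      rw [← Real.exp_nat_mul]
      congr 1
      field_simp
    have h4 : (1 + 1 / (T : ℝ)) ^ t ≤ Real.exp 1 := h1.trans (h2.trans_eq h3)
    exact mul_le_mul_of_nonneg_right h4 hδ0
  -- from squares to norms
  set M := Real.sqrt (Real.exp 1 * δ ^ 2) with hMdef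
  have hM2 : M ^ 2 = Real.exp 1 * δ ^ 2 := Real.sq_sqrt (by positivity)
  have hMt : ∀ t, t ≤ T → ‖z t - z' t‖ ≤ M := by
    intro t ht
    have h1 : ‖z t - z' t‖ = Real.sqrt (‖z t - z' t‖ ^ 2) := (Real.sqrt_sq (norm_nonneg _)).symm
    rw [h1]
    exact Real.sqrt_le_sqrt (hebound t ht)
  have hpart1 : ‖(T : ℝ)⁻¹ • ∑ t ∈ Finset.range T, z t
      - (T : ℝ)⁻¹ • ∑ t ∈ Finset.range T, z' t‖ ^ 2 ≤ Real.exp 1 * δ ^ 2 := by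
    have hsum : (T : ℝ)⁻¹ • ∑ t ∈ Finset.range T, z t - (T : ℝ)⁻¹ • ∑ t ∈ Finset.range T, z' t
        = (T : ℝ)⁻¹ • ∑ t ∈ Finset.range T, (z t - z' t) := by
      rw [Finset.sum_sub_distrib, smul_sub]
    have hnorm : ‖(T : ℝ)⁻¹ • ∑ t ∈ Finset.range T, z t
        - (T : ℝ)⁻¹ • ∑ t ∈ Finset.range T, z' t‖ ≤ M := by
      rw [hsum, norm_smul]
      have h1 : ‖∑ t ∈ Finset.range T, (z t - z' t)‖ ≤ ∑ t ∈ Finset.range T, ‖z t - z' t‖ :=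
        norm_sum_le _ _
      have h2 : ∑ t ∈ Finset.range T, ‖z t - z' t‖ ≤ T * M := by
        calc ∑ t ∈ Finset.range T, ‖z t - z' t‖ ≤ ∑ _t ∈ Finset.range T, M :=
              Finset.sum_le_sum fun t ht => hMt t (Finset.mem_range.mp ht).le
          _ = T * M := by rw [Finset.sum_const, Finset.card_range, nsmul_eq_mul]
      have h3 : ‖(T : ℝ)⁻¹‖ = (T : ℝ)⁻¹ := Real.norm_of_nonneg (by positivity)
      rw [h3]
      calc (T : ℝ)⁻¹ * ‖∑ t ∈ Finset.range T, (z t - z' t)‖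
          ≤ (T : ℝ)⁻¹ * (T * M) := by
            exact mul_le_mul_of_nonneg_left (h1.trans h2) (by positivity)
        _ = M := by field_simp
    calc ‖(T : ℝ)⁻¹ • ∑ t ∈ Finset.range T, z t
        - (T : ℝ)⁻¹ • ∑ t ∈ Finset.range T, z' t‖ ^ 2 ≤ M ^ 2 :=
          pow_le_pow_left₀ (norm_nonneg _) hnorm 2
      _ = Real.exp 1 * δ ^ 2 := hM2
  refine ⟨hpart1, ?_⟩
  -- Part 2
  intro x hx y hy
  set w : WithLp 2 (E × E') := (WithLp.equiv 2 (E × E')).symm (x, y) with hwdef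
  have hwS : w ∈ prodSet X Y := ⟨hx, hy⟩
  have hd1 : ∀ b : E', Differentiable ℝ (fun u : E => F (u, b)) := fun b =>
    hFdiff.comp (differentiable_id.prodMk (differentiable_const b))
  have hd2 : ∀ a : E, Differentiable ℝ (fun v : E' => F (a, v)) := fun a =>
    hFdiff.comp ((differentiable_const a).prodMk differentiable_id)
  -- the duality gap at each iterate is bounded by the inner product with the saddle operator
  have hgap : ∀ t < T,
      F ((z t).fst, y) - F (x, (z t).snd) ≤ ⟪saddleOp F (z t), z t - w⟫ := by
    intro t ht
    have hxt : (z t).fst ∈ X := (hzS t ht.le).1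
    have hyt : (z t).snd ∈ Y := (hzS t ht.le).2
    have h1 : ⟪gradient (fun u => F (u, (z t).snd)) (z t).fst, x - (z t).fst⟫ ≤
        F (x, (z t).snd) - F ((z t).fst, (z t).snd) :=
      (hcvx _ hyt).inner_gradient_le' hXcv hxt hx ((hd1 (z t).snd) (z t).fst)
    have h2 : ⟪gradient (fun v => -F ((z t).fst, v)) (z t).snd, y - (z t).snd⟫ ≤
        (-F ((z t).fst, y)) - (-F ((z t).fst, (z t).snd)) :=
      ((hccv _ hxt).neg).inner_gradient_le' hYcv hyt hy (((hd2 (z t).fst).neg) (z t).snd)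
    have hgneg : gradient (fun v => -F ((z t).fst, v)) (z t).snd
        = -gradient (fun v => F ((z t).fst, v)) (z t).snd :=
      gradient_neg' ((hd2 (z t).fst) (z t).snd)
    rw [hgneg] at h2
    have hinner : ⟪saddleOp F (z t), z t - w⟫
        = ⟪gradient (fun u => F (u, (z t).snd)) (z t).fst, (z t).fst - x⟫
          + ⟪-gradient (fun v => F ((z t).fst, v)) (z t).snd, (z t).snd - y⟫ := by
      rw [WithLp.prod_inner_apply]
      rfl
    have e1 : ⟪gradient (fun u => F (u, (z t).snd)) (z t).fst, (z t).fst - x⟫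
        = -⟪gradient (fun u => F (u, (z t).snd)) (z t).fst, x - (z t).fst⟫ := by
      rw [← inner_neg_right]; congr 1; abel
    have e2 : ⟪-gradient (fun v => F ((z t).fst, v)) (z t).snd, (z t).snd - y⟫
        = -⟪-gradient (fun v => F ((z t).fst, v)) (z t).snd, y - (z t).snd⟫ := by
      rw [← inner_neg_right]; congr 1; abel
    rw [hinner, e1, e2]
    linarith
  -- per-step descent inequality
  have hdescent : ∀ t < T, 2 * α * ⟪saddleOp F (z t), z t - w⟫ ≤
      ‖z t - w‖ ^ 2 - ‖z (t + 1) - w‖ ^ 2 + α ^ 2 * L ^ 2 := by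
    intro t ht
    have hvi : ⟪(z t - α • saddleOp F (z t)) - z (t + 1), w - z (t + 1)⟫ ≤ 0 :=
      (hupd t ht).inner_le' hScv w hwS
    set v := z t - α • saddleOp F (z t) with hvdef
    have h1 : ‖z (t + 1) - w‖ ^ 2 ≤ ‖v - w‖ ^ 2 := by
      have e := norm_add_sq_real (v - z (t + 1)) (z (t + 1) - w)
      have e2 : v - z (t + 1) + (z (t + 1) - w) = v - w := by abel
      rw [e2] at e
      have e3 : ⟪v - z (t + 1), z (t + 1) - w⟫ = -⟪v - z (t + 1), w - z (t + 1)⟫ := by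
        rw [← inner_neg_right]; congr 1; abel
      nlinarith [sq_nonneg ‖v - z (t + 1)‖]
    have h2 : ‖v - w‖ ^ 2 = ‖z t - w‖ ^ 2 - 2 * (α * ⟪z t - w, saddleOp F (z t)⟫)
        + α ^ 2 * ‖saddleOp F (z t)‖ ^ 2 := by
      have e : v - w = (z t - w) - α • saddleOp F (z t) := by rw [hvdef]; abel
      rw [e, norm_sub_sq_real, real_inner_smul_right, norm_smul, mul_pow, Real.norm_eq_abs,
        sq_abs]
    have h3 : ‖saddleOp F (z t)‖ ^ 2 ≤ L ^ 2 :=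
      pow_le_pow_left₀ (norm_nonneg _) (hL _ (hzS t ht.le)) 2
    have h4 : ⟪z t - w, saddleOp F (z t)⟫ = ⟪saddleOp F (z t), z t - w⟫ := real_inner_comm _ _
    rw [h4] at h2
    nlinarith [mul_le_mul_of_nonneg_left h3 (sq_nonneg α)]
  -- summing the descent inequalities
  have htel : ∑ t ∈ Finset.range T, (‖z t - w‖ ^ 2 - ‖z (t + 1) - w‖ ^ 2)
      = ‖z 0 - w‖ ^ 2 - ‖z T - w‖ ^ 2 := Finset.sum_range_sub' (fun t => ‖z t - w‖ ^ 2) T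
  have hsum2 : 2 * α * ∑ t ∈ Finset.range T, ⟪saddleOp F (z t), z t - w⟫ ≤
      ‖z 0 - w‖ ^ 2 - ‖z T - w‖ ^ 2 + T * (α ^ 2 * L ^ 2) := by
    rw [Finset.mul_sum]
    calc ∑ t ∈ Finset.range T, 2 * α * ⟪saddleOp F (z t), z t - w⟫
        ≤ ∑ t ∈ Finset.range T, (‖z t - w‖ ^ 2 - ‖z (t + 1) - w‖ ^ 2 + α ^ 2 * L ^ 2) :=
          Finset.sum_le_sum fun t htt => hdescent t (Finset.mem_range.mp htt)
      _ = ‖z 0 - w‖ ^ 2 - ‖z T - w‖ ^ 2 + T * (α ^ 2 * L ^ 2) := by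
          rw [Finset.sum_add_distrib, htel, Finset.sum_const, Finset.card_range, nsmul_eq_mul]
  have hD2 : ‖z 0 - w‖ ^ 2 ≤ 2 * D ^ 2 := by
    rw [WithLp.prod_norm_sq_eq_of_L2]
    have hwf : w.fst = x := rfl
    have hws : w.snd = y := rfl
    have hf1 : ‖(z 0 - w).fst‖ ≤ D := by rw [WithLp.sub_fst, hwf]; exact hXD _ hz0.1 x hx
    have hf2 : ‖(z 0 - w).snd‖ ≤ D := by rw [WithLp.sub_snd, hws]; exact hYD _ hz0.2 y hy
    have hq1 := pow_le_pow_left₀ (norm_nonneg _) hf1 2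
    have hq2 := pow_le_pow_left₀ (norm_nonneg _) hf2 2
    linarith
  -- averaged iterate components
  set fstL : WithLp 2 (E × E') →ₗ[ℝ] E :=
    (LinearMap.fst ℝ E E').comp (WithLp.linearEquiv 2 ℝ (E × E')).toLinearMap with hfstL
  set sndL : WithLp 2 (E × E') →ₗ[ℝ] E' :=
    (LinearMap.snd ℝ E E').comp (WithLp.linearEquiv 2 ℝ (E × E')).toLinearMap with hsndL
  have hfstapp : ∀ v : WithLp 2 (E × E'), fstL v = v.fst := fun _ => rfl
  have hsndapp : ∀ v : WithLp 2 (E × E'), sndL v = v.snd := fun _ => rfl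
  have hxbar : (WithLp.equiv 2 (E × E') ((T : ℝ)⁻¹ • ∑ t ∈ Finset.range T, z t)).1
      = ∑ t ∈ Finset.range T, (T : ℝ)⁻¹ • (z t).fst := by
    calc (WithLp.equiv 2 (E × E') ((T : ℝ)⁻¹ • ∑ t ∈ Finset.range T, z t)).1
        = (T : ℝ)⁻¹ • fstL (∑ t ∈ Finset.range T, z t) := rfl
      _ = (T : ℝ)⁻¹ • ∑ t ∈ Finset.range T, fstL (z t) := by rw [map_sum]
      _ = ∑ t ∈ Finset.range T, (T : ℝ)⁻¹ • (z t).fst := by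
          rw [Finset.smul_sum]; rfl
  have hybar : (WithLp.equiv 2 (E × E') ((T : ℝ)⁻¹ • ∑ t ∈ Finset.range T, z t)).2
      = ∑ t ∈ Finset.range T, (T : ℝ)⁻¹ • (z t).snd := by
    calc (WithLp.equiv 2 (E × E') ((T : ℝ)⁻¹ • ∑ t ∈ Finset.range T, z t)).2
        = (T : ℝ)⁻¹ • sndL (∑ t ∈ Finset.range T, z t) := rfl
      _ = (T : ℝ)⁻¹ • ∑ t ∈ Finset.range T, sndL (z t) := by rw [map_sum]
      _ = ∑ t ∈ Finset.range T, (T : ℝ)⁻¹ • (z t).snd := by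
          rw [Finset.smul_sum]; rfl
  have hwsum : ∑ _t ∈ Finset.range T, (T : ℝ)⁻¹ = 1 := by
    rw [Finset.sum_const, Finset.card_range, nsmul_eq_mul]
    field_simp
  -- Jensen on both components
  have hJ1 : F ((WithLp.equiv 2 (E × E') ((T : ℝ)⁻¹ • ∑ t ∈ Finset.range T, z t)).1, y)
      ≤ ∑ t ∈ Finset.range T, (T : ℝ)⁻¹ • F ((z t).fst, y) := by
    rw [hxbar]
    exact (hcvx y hy).map_sum_le (fun t _ => by positivity) hwsum
      (fun t htt => (hzS t (Finset.mem_range.mp htt).le).1)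
  have hJ2 : ∑ t ∈ Finset.range T, (T : ℝ)⁻¹ • F (x, (z t).snd)
      ≤ F (x, (WithLp.equiv 2 (E × E') ((T : ℝ)⁻¹ • ∑ t ∈ Finset.range T, z t)).2) := by
    rw [hybar]
    exact (hccv x hx).le_map_sum (fun t _ => by positivity) hwsum
      (fun t htt => (hzS t (Finset.mem_range.mp htt).le).2)
  -- arithmetic with the stepsize
  have hD0 : 0 ≤ D := by
    obtain ⟨x0, hx0⟩ := hXne
    have := hXD x0 hx0 x0 hx0
    simpa using this
  set R := (ℓ * D ^ 2 + L ^ 2 / (2 * ℓ)) / Real.sqrt T with hRdef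
  have hgapsum : ∑ t ∈ Finset.range T, (F ((z t).fst, y) - F (x, (z t).snd)) ≤ T * R := by
    have hsum3 : ∑ t ∈ Finset.range T, (F ((z t).fst, y) - F (x, (z t).snd))
        ≤ ∑ t ∈ Finset.range T, ⟪saddleOp F (z t), z t - w⟫ :=
      Finset.sum_le_sum fun t htt => hgap t (Finset.mem_range.mp htt)
    have h5 : 2 * α * ∑ t ∈ Finset.range T, ⟪saddleOp F (z t), z t - w⟫
        ≤ 2 * D ^ 2 + T * (α ^ 2 * L ^ 2) := by
      nlinarith [sq_nonneg ‖z T - w‖]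
    have harith : 2 * D ^ 2 + (T : ℝ) * (α ^ 2 * L ^ 2) = 2 * α * ((T : ℝ) * R) := by
      rw [hRdef, hα]
      rw [div_pow, one_pow, mul_pow, hsT2]
      field_simp
      linear_combination (2 * D ^ 2 * ℓ ^ 2 + L ^ 2) * hsT2
    have h6 : 2 * α * ∑ t ∈ Finset.range T, (F ((z t).fst, y) - F (x, (z t).snd))
        ≤ 2 * α * ((T : ℝ) * R) := by
      calc 2 * α * ∑ t ∈ Finset.range T, (F ((z t).fst, y) - F (x, (z t).snd))
          ≤ 2 * α * ∑ t ∈ Finset.range T, ⟪saddleOp F (z t), z t - w⟫ :=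
            mul_le_mul_of_nonneg_left hsum3 (by positivity)
        _ ≤ 2 * D ^ 2 + T * (α ^ 2 * L ^ 2) := h5
        _ = 2 * α * ((T : ℝ) * R) := harith
    exact le_of_mul_le_mul_left h6 (by positivity)
  calc F ((WithLp.equiv 2 (E × E') ((T : ℝ)⁻¹ • ∑ t ∈ Finset.range T, z t)).1, y)
      - F (x, (WithLp.equiv 2 (E × E') ((T : ℝ)⁻¹ • ∑ t ∈ Finset.range T, z t)).2)
      ≤ (∑ t ∈ Finset.range T, (T : ℝ)⁻¹ • F ((z t).fst, y))
        - ∑ t ∈ Finset.range T, (T : ℝ)⁻¹ • F (x, (z t).snd) := sub_le_sub hJ1 hJ2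
    _ = (T : ℝ)⁻¹ * ∑ t ∈ Finset.range T, (F ((z t).fst, y) - F (x, (z t).snd)) := by
        rw [← Finset.sum_sub_distrib, Finset.mul_sum]
        refine Finset.sum_congr rfl fun t _ => ?_
        rw [smul_eq_mul, smul_eq_mul, mul_sub]
    _ ≤ (T : ℝ)⁻¹ * ((T : ℝ) * R) := mul_le_mul_of_nonneg_left hgapsum (by positivity)
    _ = R := by field_simp
end
end

section
/- Let E and E' be real Hilbert spaces, X ⊆ E and Y ⊆ E' nonempty bounded closed convex sets each of diameter at most D, and F : E × E' → ℝ a differentiable function that is convex-concave on X × Y, with saddle operator G(x,y) = (∇_x F(x,y), −∇_y F(x,y)). Assume G is monotone and ℓ-Lipschitz on X × Y and ‖G(z)‖ ≤ L for all z ∈ X × Y. Let T ≥ 1, set α = 1/ℓ, fix z₀, z₀' ∈ X × Y with ‖z₀ − z₀'‖ ≤ δ, and define two Extragradient trajectories via z_{t+1/2} = Π_{X×Y}(z_t − α·G(z_t)), z_{t+1} = Π_{X×Y}(z_t − α·G(z_{t+1/2})) and analogously for the primed sequence, for t = 0, …, T−1. Let z̄_{T+1/2} = (1/T)·Σ_{t=0}^{T−1}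 z_{t+1/2} and z̄'_{T+1/2} the analogous average. Then ‖z̄_{T+1/2} − z̄'_{T+1/2}‖² ≤ 4δ² + (16L²/(3ℓ²))·T². -/
open RealInnerProductSpace

noncomputable section

variable {E E' : Type*} [NormedAddCommGroup E] [InnerProductSpace ℝ E] [CompleteSpace E]
  [NormedAddCommGroup E'] [InnerProductSpace ℝ E'] [CompleteSpace E']

lemma isProjOn_inner_le {H : Type*} [NormedAddCommGroup H] [InnerProductSpace ℝ H]
    {S : Set H} (hS : Convex ℝ S) {v p : H}
    (h : p ∈ S ∧ ∀ w ∈ S, ‖v - p‖ ≤ ‖v - w‖) :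
    ∀ w ∈ S, ⟪v - p, w - p⟫ ≤ 0 := by
  haveI : Nonempty S := ⟨⟨p, h.1⟩⟩
  have hinf : ‖v - p‖ = ⨅ w : S, ‖v - w‖ := by
    refine le_antisymm (le_ciInf fun w => h.2 w w.2) ?_
    have hbdd : BddBelow (Set.range fun w : S => ‖v - (w : H)‖) := by
      refine ⟨0, ?_⟩
      rintro x ⟨w, rfl⟩
      exact norm_nonneg _
    exact ciInf_le hbdd ⟨p, h.1⟩
  exact (norm_eq_iInf_iff_real_inner_le_zero hS h.1).mp hinf

lemma isProjOn_nonexpansive {H : Type*} [NormedAddCommGroup H] [InnerProductSpace ℝ H]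
    {S : Set H} (hS : Convex ℝ S) {v p v' p' : H}
    (h : p ∈ S ∧ ∀ w ∈ S, ‖v - p‖ ≤ ‖v - w‖)
    (h' : p' ∈ S ∧ ∀ w ∈ S, ‖v' - p'‖ ≤ ‖v' - w‖) :
    ‖p - p'‖ ≤ ‖v - v'‖ := by
  have h1 : ⟪v - p, p' - p⟫ ≤ 0 := isProjOn_inner_le hS h p' h'.1
  have h2 : ⟪v' - p', p - p'⟫ ≤ 0 := isProjOn_inner_le hS h' p h.1
  have key : ‖p - p'‖ ^ 2 ≤ ⟪v - v', p - p'⟫ := by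
    have e : ⟪v - v', p - p'⟫ - ‖p - p'‖ ^ 2
        = -⟪v - p, p' - p⟫ - ⟪v' - p', p - p'⟫ := by
      rw [← real_inner_self_eq_norm_sq]
      simp only [inner_sub_left, inner_sub_right]
      ring
    nlinarith
  have cauchy : ⟪v - v', p - p'⟫ ≤ ‖v - v'‖ * ‖p - p'‖ := real_inner_le_norm _ _
  nlinarith [norm_nonneg (p - p'), norm_nonneg (v - v')]

lemma prodSet_convex {X : Set E} {Y : Set E'} (hX : Convex ℝ X) (hY : Convex ℝ Y) :
    Convex ℝ (prodSet X Y) := by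
  have : prodSet X Y =
      (WithLp.linearEquiv 2 ℝ (E × E') : WithLp 2 (E × E') →ₗ[ℝ] E × E') ⁻¹' (X ×ˢ Y) := rfl
  rw [this]
  exact (hX.prod hY).linear_preimage _

/-- Theorem 4.3, part (i), reproducibility of Extragradient under a
`δ`-inexact initialization oracle.  Two Extragradient trajectories with stepsize `α = 1/ℓ`
started from `z₀, z₀'` with `‖z₀ − z₀'‖ ≤ δ` satisfy
`‖z̄_{T+1/2} − z̄'_{T+1/2}‖² ≤ 4δ² + (16L²/(3ℓ²))·T²` for the averaged half-iterates. -/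
theorem extragradient_inexact_initialization_reproducibility
    (X : Set E) (Y : Set E') (hXne : X.Nonempty) (hYne : Y.Nonempty)
    (hXbd : Bornology.IsBounded X) (hYbd : Bornology.IsBounded Y)
    (hXcl : IsClosed X) (hYcl : IsClosed Y) (hXcv : Convex ℝ X) (hYcv : Convex ℝ Y)
    (D : ℝ) (hXD : ∀ s₁ ∈ X, ∀ s₂ ∈ X, ‖s₁ - s₂‖ ≤ D) (hYD : ∀ s₁ ∈ Y, ∀ s₂ ∈ Y, ‖s₁ - s₂‖ ≤ D)
    (F : E × E' → ℝ) (hFdiff : Differentiable ℝ F)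
    (hcvx : ∀ y ∈ Y, ConvexOn ℝ X (fun x => F (x, y)))
    (hccv : ∀ x ∈ X, ConcaveOn ℝ Y (fun y => F (x, y)))
    (ℓ : ℝ) (hℓ : 0 < ℓ)
    (hmono : ∀ z₁ ∈ prodSet X Y, ∀ z₂ ∈ prodSet X Y,
      0 ≤ ⟪saddleOp F z₁ - saddleOp F z₂, z₁ - z₂⟫)
    (hlip : ∀ z₁ ∈ prodSet X Y, ∀ z₂ ∈ prodSet X Y,
      ‖saddleOp F z₁ - saddleOp F z₂‖ ≤ ℓ * ‖z₁ - z₂‖)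
    (L : ℝ) (hL : ∀ z ∈ prodSet X Y, ‖saddleOp F z‖ ≤ L)
    (T : ℕ) (hT : 1 ≤ T) (α : ℝ) (hα : α = 1 / ℓ)
    (δ : ℝ)
    (z w z' w' : ℕ → WithLp 2 (E × E'))
    (hz0 : z 0 ∈ prodSet X Y) (hz0' : z' 0 ∈ prodSet X Y)
    (hdev : ‖z 0 - z' 0‖ ≤ δ)
    (hhalf : ∀ t < T, IsProjOn (prodSet X Y) (z t - α • saddleOp F (z t)) (w t))
    (hfull : ∀ t < T, IsProjOn (prodSet X Y) (z t - α • saddleOp F (w t)) (z (t + 1)))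
    (hhalf' : ∀ t < T, IsProjOn (prodSet X Y) (z' t - α • saddleOp F (z' t)) (w' t))
    (hfull' : ∀ t < T, IsProjOn (prodSet X Y) (z' t - α • saddleOp F (w' t)) (z' (t + 1))) :
    ‖(T : ℝ)⁻¹ • ∑ t ∈ Finset.range T, w t - (T : ℝ)⁻¹ • ∑ t ∈ Finset.range T, w' t‖ ^ 2 ≤
      4 * δ ^ 2 + 16 * L ^ 2 / (3 * ℓ ^ 2) * T ^ 2 := by
  set S := prodSet X Y with hSdef
  have hScv : Convex ℝ S := prodSet_convex hXcv hYcv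
  have hα0 : 0 < α := by rw [hα]; positivity
  have hL0 : 0 ≤ L := le_trans (norm_nonneg _) (hL (z 0) hz0)
  have hδ0 : 0 ≤ δ := le_trans (norm_nonneg _) hdev
  -- membership of iterates
  have hzmem : ∀ t ≤ T, z t ∈ S := by
    intro t ht
    induction t with
    | zero => exact hz0
    | succ n ih => exact (hfull n (Nat.lt_of_succ_le ht)).1
  have hzmem' : ∀ t ≤ T, z' t ∈ S := by
    intro t ht
    induction t with
    | zero => exact hz0'
    | succ n ih => exact (hfull' n (Nat.lt_of_succ_le ht)).1
  -- deviation growth for full iterates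
  have step : ∀ (a b : WithLp 2 (E × E')) (A B : WithLp 2 (E × E')),
      ‖A‖ ≤ L → ‖B‖ ≤ L →
      ‖(a - α • A) - (b - α • B)‖ ≤ ‖a - b‖ + 2 * α * L := by
    intro a b A B hA hB
    have hrw : (a - α • A) - (b - α • B) = (a - b) + (α • B - α • A) := by abel
    calc ‖(a - α • A) - (b - α • B)‖ = ‖(a - b) + (α • B - α • A)‖ := by rw [hrw]
      _ ≤ ‖a - b‖ + ‖α • B - α • A‖ := norm_add_le _ _
      _ ≤ ‖a - b‖ + (‖α • B‖ + ‖α • A‖) := by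
          gcongr; exact norm_sub_le _ _
      _ ≤ ‖a - b‖ + 2 * α * L := by
          rw [norm_smul, norm_smul, Real.norm_eq_abs, abs_of_pos hα0]
          nlinarith
  have hzz : ∀ t ≤ T, ‖z t - z' t‖ ≤ δ + 2 * α * L * t := by
    intro t ht
    induction t with
    | zero => simpa using hdev
    | succ n ih =>
        have hn : n < T := Nat.lt_of_succ_le ht
        have ihn := ih (le_of_lt hn)
        have hne := isProjOn_nonexpansive hScv (hfull n hn) (hfull' n hn)
        have hstep := step (z n) (z' n) (saddleOp F (w n)) (saddleOp F (w' n))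
          (hL _ (hhalf n hn).1) (hL _ (hhalf' n hn).1)
        have := le_trans hne hstep
        push_cast
        nlinarith
  have hww : ∀ t < T, ‖w t - w' t‖ ≤ δ + 2 * α * L * T := by
    intro t ht
    have hne := isProjOn_nonexpansive hScv (hhalf t ht) (hhalf' t ht)
    have hstep := step (z t) (z' t) (saddleOp F (z t)) (saddleOp F (z' t))
      (hL _ (hzmem t ht.le)) (hL _ (hzmem' t ht.le))
    have h1 := hzz t ht.le
    have ht1 : (t : ℝ) + 1 ≤ T := by exact_mod_cast Nat.succ_le_of_lt ht
    nlinarith [le_trans hne hstep,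
      mul_nonneg (mul_nonneg hα0.le hL0) (sub_nonneg.mpr ht1)]
  -- bound the averaged deviation
  have hT0 : (0 : ℝ) < T := by exact_mod_cast Nat.lt_of_lt_of_le Nat.zero_lt_one hT
  have havg : ‖(T : ℝ)⁻¹ • ∑ t ∈ Finset.range T, w t -
      (T : ℝ)⁻¹ • ∑ t ∈ Finset.range T, w' t‖ ≤ δ + 2 * α * L * T := by
    rw [← smul_sub, ← Finset.sum_sub_distrib, norm_smul, Real.norm_eq_abs,
      abs_of_pos (inv_pos.mpr hT0)]
    have hsum : ‖∑ t ∈ Finset.range T, (w t - w' t)‖ ≤ (T : ℝ) * (δ + 2 * α * L * T) := by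
      calc ‖∑ t ∈ Finset.range T, (w t - w' t)‖
          ≤ ∑ t ∈ Finset.range T, ‖w t - w' t‖ := norm_sum_le _ _
        _ ≤ ∑ t ∈ Finset.range T, (δ + 2 * α * L * T) := by
            exact Finset.sum_le_sum fun t htt => hww t (Finset.mem_range.mp htt)
        _ = (T : ℝ) * (δ + 2 * α * L * T) := by
            rw [Finset.sum_const, Finset.card_range, nsmul_eq_mul]
    calc (T : ℝ)⁻¹ * ‖∑ t ∈ Finset.range T, (w t - w' t)‖
        ≤ (T : ℝ)⁻¹ * ((T : ℝ) * (δ + 2 * α * L * T)) := by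
          gcongr
      _ = δ + 2 * α * L * T := by field_simp
  -- final algebra
  have hrhs : 16 * L ^ 2 / (3 * ℓ ^ 2) * (T : ℝ) ^ 2 = 16 / 3 * (α * L * T) ^ 2 := by
    rw [hα]; field_simp
  rw [hrhs]
  have hN0 := norm_nonneg ((T : ℝ)⁻¹ • ∑ t ∈ Finset.range T, w t -
      (T : ℝ)⁻¹ • ∑ t ∈ Finset.range T, w' t)
  nlinarith [sq_nonneg (3 * δ - 2 * α * L * T), mul_nonneg (mul_nonneg hα0.le hL0) hT0.le]
end
end
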